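/- Let B be a braided category and let y be an invertible object of B (i.e. there is an object y' and isomorphisms y⊗y' ≅ 𝟙 and y'⊗y ≅ 𝟙). For each object X there is a unique morphism φ^y_X : X → X such that φ^y_X ⊗ 𝟙_y = τ_{y,X} ∘ τ_{X,y} : X⊗y → X⊗y (the double braiding of X with y); moreover (i) φ^y is a natural automorphism of the identity functor of B, (ii) φ^y is monoidal, i.e. φ^y_{X⊗Z} = φ^y_X ⊗ φ^y_Z for all X, Z and φ^y_𝟙 = 𝟙, and (iii) for invertible objects y and z one has φ^{y⊗z}_X = φ^y_X ∘ φ^z_X for all X, and φ^y = φ^{y₁} whenever y ≅ y₁. -/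

import Mathlib

open CategoryTheory MonoidalCategory

variable {B : Type*} [Category B] [MonoidalCategory B] [BraidedCategory B]

section Aux

variable {C : Type*} [Category C] [MonoidalCategory C]

/-- The canonical isomorphism `X ≅ (X ⊗ y) ⊗ w` coming from an isomorphism `y ⊗ w ≅ 𝟙`. -/
def doubleBraidingAux.uIso {y w : C} (ε : y ⊗ w ≅ 𝟙_ C) (X : C) : X ≅ (X ⊗ y) ⊗ w :=
  (ρ_ X).symm ≪≫ whiskerLeftIso X ε.symm ≪≫ (α_ X y w).symm

lemma doubleBraidingAux.conj_aux {X Z y w : C} (ε : y ⊗ w ≅ 𝟙_ C) (f : X ⟶ Z) :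
    (uIso ε X).hom ≫ f ▷ y ▷ w ≫ (uIso ε Z).inv = f := by
  simp only [uIso, Iso.trans_hom, Iso.trans_inv, Iso.symm_hom, Iso.symm_inv, whiskerLeftIso_hom,
    whiskerLeftIso_inv, Category.assoc]
  rw [associator_naturality_left_assoc, Iso.inv_hom_id_assoc, ← whisker_exchange_assoc]
  simp

/-- Whiskering on the right by an object with a right inverse is injective. -/
lemma doubleBraidingAux.cancel_wr {X Z y w : C} (ε : y ⊗ w ≅ 𝟙_ C) {f g : X ⟶ Z}
    (h : f ▷ y = g ▷ y) : f = g := by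
  rw [← conj_aux ε f, ← conj_aux ε g, h]

/-- Whiskering on the right by an invertible object is surjective on hom sets. -/
lemma doubleBraidingAux.full_wr {X Z y w : C} (ε : y ⊗ w ≅ 𝟙_ C) (ε' : w ⊗ y ≅ 𝟙_ C)
    (h : X ⊗ y ⟶ Z ⊗ y) : ∃ f : X ⟶ Z, f ▷ y = h := by
  refine ⟨(uIso ε X).hom ≫ h ▷ w ≫ (uIso ε Z).inv, ?_⟩
  apply cancel_wr ε'
  have h2 := conj_aux ε ((uIso ε X).hom ≫ h ▷ w ≫ (uIso ε Z).inv)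
  rw [Iso.cancel_iso_hom_left] at h2
  exact (cancel_mono (uIso ε Z).inv).mp h2

end Aux

namespace doubleBraidingAux

lemma tensor_phi {X Z y : B} (fX : X ⟶ X) (fZ : Z ⟶ Z)
    (hX : fX ▷ y = (β_ X y).hom ≫ (β_ y X).hom) (hZ : fZ ▷ y = (β_ Z y).hom ≫ (β_ y Z).hom) :
    (fX ⊗ₘ fZ) ▷ y = (β_ (X ⊗ Z) y).hom ≫ (β_ y (X ⊗ Z)).hom := by
  rw [BraidedCategory.braiding_tensor_left_hom, BraidedCategory.braiding_tensor_right_hom]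
  calc (fX ⊗ₘ fZ) ▷ y
      = (fX ▷ Z) ▷ y ≫ (X ◁ fZ) ▷ y := by rw [MonoidalCategory.tensorHom_def, comp_whiskerRight]
    _ = (α_ X Z y).hom ≫ fX ▷ (Z ⊗ y) ≫ (α_ X Z y).inv ≫ (α_ X Z y).hom ≫ X ◁ (fZ ▷ y) ≫
          (α_ X Z y).inv := by
        rw [← associator_naturality_left_assoc, ← associator_naturality_middle_assoc]; simp
    _ = (α_ X Z y).hom ≫ fX ▷ (Z ⊗ y) ≫ X ◁ ((β_ Z y).hom ≫ (β_ y Z).hom) ≫ (α_ X Z y).inv := by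
        rw [Iso.inv_hom_id_assoc, hZ]
    _ = (α_ X Z y).hom ≫ X ◁ (β_ Z y).hom ≫ fX ▷ (y ⊗ Z) ≫ X ◁ (β_ y Z).hom ≫
          (α_ X Z y).inv := by
        rw [MonoidalCategory.whiskerLeft_comp, whisker_exchange_assoc]
        simp only [Category.assoc]
    _ = (α_ X Z y).hom ≫ X ◁ (β_ Z y).hom ≫ (α_ X y Z).inv ≫ (fX ▷ y) ▷ Z ≫ (α_ X y Z).hom ≫
          X ◁ (β_ y Z).hom ≫ (α_ X Z y).inv := by
        rw [associator_naturality_left_assoc, Iso.inv_hom_id_assoc]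
    _ = _ := by rw [hX]; simp

lemma mul_phi {X y z : B} (fy fz : X ⟶ X)
    (hy : fy ▷ y = (β_ X y).hom ≫ (β_ y X).hom) (hz : fz ▷ z = (β_ X z).hom ≫ (β_ z X).hom) :
    (fy ≫ fz) ▷ (y ⊗ z) = (β_ X (y ⊗ z)).hom ≫ (β_ (y ⊗ z) X).hom := by
  rw [BraidedCategory.braiding_tensor_right_hom, BraidedCategory.braiding_tensor_left_hom]
  calc (fy ≫ fz) ▷ (y ⊗ z)
      = (α_ X y z).inv ≫ (fy ▷ y ≫ fz ▷ y) ▷ z ≫ (α_ X y z).hom := by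
        rw [← comp_whiskerRight, associator_naturality_left]; simp
    _ = (α_ X y z).inv ≫ ((β_ X y).hom ≫ y ◁ fz ≫ (β_ y X).hom) ▷ z ≫ (α_ X y z).hom := by
        rw [hy, Category.assoc, BraidedCategory.braiding_naturality_right]
    _ = (α_ X y z).inv ≫ (β_ X y).hom ▷ z ≫ (α_ y X z).hom ≫ y ◁ (fz ▷ z) ≫ (α_ y X z).inv ≫
          (β_ y X).hom ▷ z ≫ (α_ X y z).hom := by
        rw [comp_whiskerRight, comp_whiskerRight, ← associator_naturality_middle_assoc]; simp
    _ = _ := by rw [hz]; simp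

lemma dbl_natural {X Z w : B} (f : X ⟶ Z) :
    f ▷ w ≫ (β_ Z w).hom ≫ (β_ w Z).hom = ((β_ X w).hom ≫ (β_ w X).hom) ≫ f ▷ w := by
  rw [BraidedCategory.braiding_naturality_left_assoc, BraidedCategory.braiding_naturality_right]
  simp

lemma iso_dbl {X y y₁ : B} (i : y ≅ y₁) (f : X ⟶ X)
    (h : f ▷ y₁ = (β_ X y₁).hom ≫ (β_ y₁ X).hom) :
    f ▷ y = (β_ X y).hom ≫ (β_ y X).hom := by
  have h1 : X ◁ i.hom ≫ (β_ X y₁).hom ≫ (β_ y₁ X).hom ≫ X ◁ i.inv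
      = (β_ X y).hom ≫ (β_ y X).hom := by
    rw [BraidedCategory.braiding_naturality_right_assoc,
      BraidedCategory.braiding_naturality_left_assoc]
    simp
  rw [← h1, ← Category.assoc ((β_ X y₁).hom), ← h, whisker_exchange_assoc]
  simp

end doubleBraidingAux

open doubleBraidingAux in
/-- For an invertible object `y` of a braided category `B`:
(existence and uniqueness) for each `X` there is a unique `φ : X ⟶ X` with
`φ ▷ y` equal to the double braiding of `X` with `y`; moreover any family `φ` with this
defining property (i) is a natural automorphism of the identity functor, (ii) is monoidal,
and (iii) is multiplicative in `y` and depends on `y` only up to isomorphism. -/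
theorem doubleBraiding_invertible_object (y y' : B)
    (e : y ⊗ y' ≅ 𝟙_ B) (e' : y' ⊗ y ≅ 𝟙_ B) :
    -- unique existence of `φ^y_X`
    (∀ X : B, ∃! φ : X ⟶ X, φ ▷ y = (β_ X y).hom ≫ (β_ y X).hom) ∧
    -- (i) and (ii): any family with the defining property is a monoidal natural
    -- automorphism of the identity functor
    (∀ φ : ∀ X : B, X ⟶ X, (∀ X : B, φ X ▷ y = (β_ X y).hom ≫ (β_ y X).hom) →
      ((∀ X : B, IsIso (φ X)) ∧
       (∀ {X Z : B} (f : X ⟶ Z), φ X ≫ f = f ≫ φ Z) ∧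
       (∀ X Z : B, φ (X ⊗ Z) = φ X ⊗ₘ φ Z) ∧
       (φ (𝟙_ B) = 𝟙 (𝟙_ B)))) ∧
    -- (iii) first part: `φ^{y⊗z} = φ^y ∘ φ^z` for invertible `z`
    (∀ (z z' : B), (z ⊗ z' ≅ 𝟙_ B) → (z' ⊗ z ≅ 𝟙_ B) →
      ∀ (φy φz φyz : ∀ X : B, X ⟶ X),
        (∀ X : B, φy X ▷ y = (β_ X y).hom ≫ (β_ y X).hom) →
        (∀ X : B, φz X ▷ z = (β_ X z).hom ≫ (β_ z X).hom) →
        (∀ X : B, φyz X ▷ (y ⊗ z) = (β_ X (y ⊗ z)).hom ≫ (β_ (y ⊗ z) X).hom) →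
        ∀ X : B, φyz X = φz X ≫ φy X) ∧
    -- (iii) second part: `φ^y = φ^{y₁}` whenever `y ≅ y₁`
    (∀ (y₁ : B), (y ≅ y₁) → ∀ (φ φ₁ : ∀ X : B, X ⟶ X),
        (∀ X : B, φ X ▷ y = (β_ X y).hom ≫ (β_ y X).hom) →
        (∀ X : B, φ₁ X ▷ y₁ = (β_ X y₁).hom ≫ (β_ y₁ X).hom) →
        ∀ X : B, φ X = φ₁ X) := by
  refine ⟨?_, ?_, ?_, ?_⟩
  · -- unique existence
    intro X
    obtain ⟨f, hf⟩ := full_wr e e' ((β_ X y).hom ≫ (β_ y X).hom)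
    exact ⟨f, hf, fun g hg => cancel_wr e (hg.trans hf.symm)⟩
  · -- (i) and (ii)
    intro φ hφ
    refine ⟨?_, ?_, ?_, ?_⟩
    · intro X
      obtain ⟨ψ, hψ⟩ := full_wr e e' ((β_ y X).inv ≫ (β_ X y).inv)
      refine ⟨ψ, cancel_wr e ?_, cancel_wr e ?_⟩
      · rw [comp_whiskerRight, hφ X, hψ, id_whiskerRight]; simp
      · rw [comp_whiskerRight, hφ X, hψ, id_whiskerRight]; simp
    · intro X Z f
      apply cancel_wr e
      rw [comp_whiskerRight, comp_whiskerRight, hφ X, hφ Z]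
      exact (dbl_natural f).symm
    · intro X Z
      exact cancel_wr e ((hφ (X ⊗ Z)).trans (tensor_phi (φ X) (φ Z) (hφ X) (hφ Z)).symm)
    · apply cancel_wr e
      rw [hφ (𝟙_ B), id_whiskerRight]
      simp
  · -- (iii) first part
    intro z z' ez ez' φy φz φyz hy hz hyz X
    have comm : φz X ≫ φy X = φy X ≫ φz X := by
      apply cancel_wr e
      rw [comp_whiskerRight, comp_whiskerRight, hy X]
      exact dbl_natural (φz X)
    have ε : (y ⊗ z) ⊗ (z' ⊗ y') ≅ 𝟙_ B :=
      α_ y z (z' ⊗ y') ≪≫ whiskerLeftIso y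
        ((α_ z z' y').symm ≪≫ whiskerRightIso ez y' ≪≫ λ_ y') ≪≫ e
    apply cancel_wr ε
    rw [hyz X, comm, ← mul_phi (φy X) (φz X) (hy X) (hz X)]
  · -- (iii) second part
    intro y₁ i φ φ₁ hφ hφ₁ X
    exact cancel_wr e ((hφ X).trans (iso_dbl i (φ₁ X) (hφ₁ X)).symm)
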